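/- Let 1 ≤ ň < N, n̂ := N − ň, and let x̌, y̌ ∈ X^ň have the same count vector, T^ň(x̌) = T^ň(y̌) =: m̌. Let D be a coherent and exchangeable set of gambles on X^N. For a gamble f on X^n̂ let I_{E_x̌}f denote the gamble on X^N = X^ň × X^n̂ mapping (z,y) to f(y) if z = x̌ and to 0 otherwise, and let I_{E_m̌}f map (z,y) to f(y) if T^ň(z) = m̌ and to 0 otherwise; set D⌋x̌ := {f ∈ G(X^n̂) : I_{E_x̌}f ∈ D} and D⌋m̌ := {f ∈ G(X^n̂) : I_{E_m̌}f ∈ D}. Then D⌋x̌ = D⌋y̌ = D⌋m̌. -/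
import Mathlib


variable {X : Type*} [Fintype X] [DecidableEq X] [Nonempty X]

/-- `ex^n(f)`: the uniform average of all permuted versions `π^t f` of `f`,
where `(π^t f)(x) = f(x ∘ π)`. -/
noncomputable def exg {X : Type*} (n : ℕ) (f : (Fin n → X) → ℝ) : (Fin n → X) → ℝ :=
  fun x => (∑ π : Equiv.Perm (Fin n), f (x ∘ π)) / (n.factorial : ℝ)

/-- `W_{A_n}`: the linear span of the gambles `f - π^t f`, which is the kernel of
the projection operator `ex^n`. -/
def WA (X : Type*) (n : ℕ) : Set ((Fin n → X) → ℝ) := {f | exg n f = 0}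

/-- A coherent set of desirable gambles on a set of possibilities `Y`. -/
def Coherent {Y : Type*} (D : Set (Y → ℝ)) : Prop :=
  (0 : Y → ℝ) ∉ D ∧ (∀ f : Y → ℝ, 0 ≤ f → f ≠ 0 → f ∈ D) ∧
  (∀ f ∈ D, ∀ c : ℝ, 0 < c → c • f ∈ D) ∧ ∀ f ∈ D, ∀ g ∈ D, f + g ∈ D

/-- A set of desirable gambles on `X^n` is exchangeable if `W_{A_n} + D ⊆ D`. -/
def Exchangeable (X : Type*) (n : ℕ) (D : Set ((Fin n → X) → ℝ)) : Prop :=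
  ∀ f ∈ WA X n, ∀ g ∈ D, f + g ∈ D

/-- The first `nc` coordinates of a sequence in `X^(nc + nh)`. -/
def firstPart {X : Type*} {nc nh : ℕ} (w : Fin (nc + nh) → X) : Fin nc → X :=
  fun i => w (Fin.castAdd nh i)

/-- The last `nh` coordinates of a sequence in `X^(nc + nh)`. -/
def lastPart {X : Type*} {nc nh : ℕ} (w : Fin (nc + nh) → X) : Fin nh → X :=
  fun j => w (Fin.natAdd nc j)

/-- `I_{E_x̌} f`: the gamble on `X^(nc+nh)` equal to `f` on the last `nh` coordinates
when the first `nc` coordinates coincide with `x̌`, and `0` otherwise. -/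
def IEx {X : Type*} [Fintype X] [DecidableEq X] {nc nh : ℕ} (xc : Fin nc → X)
    (f : (Fin nh → X) → ℝ) : (Fin (nc + nh) → X) → ℝ :=
  fun w => if firstPart w = xc then f (lastPart w) else 0

/-- The counting map `T^n`: `countVec x z` is the number of indices `k` with `x k = z`. -/
def countVec {X : Type*} [Fintype X] [DecidableEq X] {n : ℕ} (x : Fin n → X) : X → ℕ :=
  fun z => (Finset.univ.filter fun k => x k = z).card

/-- `I_{E_m̌} f`: the gamble on `X^(nc+nh)` equal to `f` on the last `nh` coordinates
when the count vector of the first `nc` coordinates is `m̌`, and `0` otherwise. -/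
def IEm {X : Type*} [Fintype X] [DecidableEq X] {nc nh : ℕ} (mc : X → ℕ)
    (f : (Fin nh → X) → ℝ) : (Fin (nc + nh) → X) → ℝ :=
  fun w => if countVec (firstPart w) = mc then f (lastPart w) else 0

def permExt {nc nh : ℕ} (σ : Equiv.Perm (Fin nc)) : Equiv.Perm (Fin (nc + nh)) :=
  (Equiv.permCongr finSumFinEquiv) (σ.sumCongr (Equiv.refl (Fin nh)))

lemma permExt_castAdd {nc nh : ℕ} (σ : Equiv.Perm (Fin nc)) (i : Fin nc) :
    permExt (nh := nh) σ (Fin.castAdd nh i) = Fin.castAdd nh (σ i) := by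
  simp [permExt, Equiv.permCongr_apply]

lemma permExt_natAdd {nc nh : ℕ} (σ : Equiv.Perm (Fin nc)) (j : Fin nh) :
    permExt (nh := nh) σ (Fin.natAdd nc j) = Fin.natAdd nc j := by
  simp [permExt, Equiv.permCongr_apply]

lemma firstPart_comp {nc nh : ℕ} (σ : Equiv.Perm (Fin nc)) (w : Fin (nc + nh) → X) :
    firstPart (w ∘ ⇑(permExt σ)) = firstPart w ∘ ⇑σ := by
  funext i
  simp [firstPart, permExt_castAdd]

lemma lastPart_comp {nc nh : ℕ} (σ : Equiv.Perm (Fin nc)) (w : Fin (nc + nh) → X) :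
    lastPart (w ∘ ⇑(permExt σ)) = lastPart w := by
  funext j
  simp [lastPart, permExt_natAdd]

lemma IEx_comp {nc nh : ℕ} (xc : Fin nc → X) (f : (Fin nh → X) → ℝ)
    (σ : Equiv.Perm (Fin nc)) (w : Fin (nc + nh) → X) :
    IEx xc f (w ∘ ⇑(permExt σ)) =
      if firstPart w ∘ ⇑σ = xc then f (lastPart w) else 0 := by
  rw [IEx, firstPart_comp, lastPart_comp]

lemma exg_comp {n : ℕ} (g : (Fin n → X) → ℝ) (π : Equiv.Perm (Fin n)) :
    exg n (fun w => g (w ∘ ⇑π)) = exg n g := by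
  funext x
  unfold exg
  congr 1
  exact Fintype.sum_equiv (Equiv.mulRight π) _ _ fun ρ => rfl

lemma exg_sub {n : ℕ} (g h : (Fin n → X) → ℝ) :
    exg n (g - h) = exg n g - exg n h := by
  funext x
  simp only [exg, Pi.sub_apply, Finset.sum_sub_distrib]
  ring

lemma exg_smul {n : ℕ} (c : ℝ) (g : (Fin n → X) → ℝ) :
    exg n (c • g) = c • exg n g := by
  funext x
  simp only [exg, Pi.smul_apply, smul_eq_mul, ← Finset.mul_sum]
  ring

lemma exg_sum {n : ℕ} {ι : Type*} (s : Finset ι) (g : ι → (Fin n → X) → ℝ) :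
    exg n (∑ i ∈ s, g i) = ∑ i ∈ s, exg n (g i) := by
  funext x
  simp only [exg, Finset.sum_apply, Finset.sum_div]
  rw [Finset.sum_comm]

lemma mem_of_sub_WA {n : ℕ} {D : Set ((Fin n → X) → ℝ)}
    (hexch : Exchangeable X n D) {g h : (Fin n → X) → ℝ}
    (hw : h - g ∈ WA X n) (hg : g ∈ D) : h ∈ D := by
  have := hexch (h - g) hw g hg
  simpa using this

lemma countVec_comp {n : ℕ} (u : Fin n → X) (σ : Equiv.Perm (Fin n)) :
    countVec (u ∘ ⇑σ) = countVec u := by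
  funext z
  exact Finset.card_equiv σ (by simp)

lemma exists_comp_eq {n : ℕ} (u v : Fin n → X) (h : countVec u = countVec v) :
    ∃ τ : Equiv.Perm (Fin n), u ∘ ⇑τ = v := by
  have e : ∀ z : X, {k // v k = z} ≃ {k // u k = z} := fun z => by
    apply Fintype.equivOfCardEq
    have h1 := congrFun h z
    simp only [countVec] at h1
    simp [Fintype.card_subtype, h1]
  refine ⟨(Equiv.ofFiberEquiv e : Fin n ≃ Fin n), ?_⟩
  funext k
  exact Equiv.ofFiberEquiv_map e k

lemma card_stab {n : ℕ} (u v : Fin n → X) (τ : Equiv.Perm (Fin n)) (hτ : u ∘ ⇑τ = v) :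
    (Finset.univ.filter fun σ : Equiv.Perm (Fin n) => u ∘ ⇑σ = v).card =
    (Finset.univ.filter fun ρ : Equiv.Perm (Fin n) => v ∘ ⇑ρ = v).card := by
  refine (Finset.card_equiv (Equiv.mulLeft τ) fun ρ => ?_).symm
  simp only [Finset.mem_filter, Finset.mem_univ, true_and, Equiv.coe_mulLeft]
  constructor
  · intro hr
    funext k
    have := congrFun hτ (ρ k)
    have h2 := congrFun hr k
    simp only [Function.comp_apply, Equiv.Perm.mul_apply] at *
    rw [this, h2]
  · intro hr
    funext k
    have := congrFun hτ (ρ k)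
    have h2 := congrFun hr k
    simp only [Function.comp_apply, Equiv.Perm.mul_apply] at *
    rw [← this, h2]

/-- Key identity: the sum over permutations of the first block of permuted `IEx`
equals the stabilizer count times `IEm`. -/
lemma sum_perm_IEx {nc nh : ℕ} (xc : Fin nc → X) (f : (Fin nh → X) → ℝ) :
    (∑ σ : Equiv.Perm (Fin nc), fun w : Fin (nc + nh) → X => IEx xc f (w ∘ ⇑(permExt σ))) =
      ((Finset.univ.filter fun ρ : Equiv.Perm (Fin nc) => xc ∘ ⇑ρ = xc).card : ℝ) •
        IEm (countVec xc) f := by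
  funext w
  simp only [Finset.sum_apply, IEx_comp, Pi.smul_apply, smul_eq_mul]
  rw [← Finset.sum_filter, Finset.sum_const, nsmul_eq_mul]
  rw [IEm]
  by_cases hc : countVec (firstPart w) = countVec xc
  · obtain ⟨τ, hτ⟩ := exists_comp_eq (firstPart w) xc hc
    rw [if_pos hc, card_stab (firstPart w) xc τ hτ]
  · rw [if_neg hc, mul_zero]
    have he : (Finset.univ.filter fun σ : Equiv.Perm (Fin nc) => firstPart w ∘ ⇑σ = xc) = ∅ := by
      rw [Finset.eq_empty_iff_forall_notMem]
      intro σ hσ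
      simp only [Finset.mem_filter, Finset.mem_univ, true_and] at hσ
      exact hc (by rw [← hσ, countVec_comp])
    rw [he]
    simp

lemma smul_IEx_sub_sum_mem_WA {nc nh : ℕ} (xc : Fin nc → X) (f : (Fin nh → X) → ℝ) :
    ((nc.factorial : ℝ) • IEx xc f -
      ∑ σ : Equiv.Perm (Fin nc), fun w : Fin (nc + nh) → X => IEx xc f (w ∘ ⇑(permExt σ)))
      ∈ WA X (nc + nh) := by
  show exg (nc + nh) _ = 0
  rw [exg_sub, exg_smul, exg_sum]
  have : ∀ σ : Equiv.Perm (Fin nc),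
      exg (nc + nh) (fun w : Fin (nc + nh) → X => IEx xc f (w ∘ ⇑(permExt σ)))
        = exg (nc + nh) (IEx xc f) := fun σ => exg_comp (IEx xc f) (permExt σ)
  rw [Finset.sum_congr rfl fun σ _ => this σ, Finset.sum_const]
  funext x
  simp [Finset.card_univ, Fintype.card_perm, Fintype.card_fin, sub_eq_zero]

lemma exg_zero {n : ℕ} : exg n (0 : (Fin n → X) → ℝ) = 0 := by
  funext x
  simp [exg]

lemma neg_mem_WA {n : ℕ} {g : (Fin n → X) → ℝ} (h : g ∈ WA X n) : -g ∈ WA X n := by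
  have hg : exg n g = 0 := h
  show exg n (-g) = 0
  rw [show -g = 0 - g from (zero_sub g).symm, exg_sub, hg, exg_zero, sub_zero]

/-- The main lemma: conditioning on a sequence is the same as on its count vector. -/
lemma IEx_mem_iff_IEm_mem {nc nh : ℕ} (xc : Fin nc → X)
    (D : Set ((Fin (nc + nh) → X) → ℝ))
    (hcoh : Coherent D) (hexch : Exchangeable X (nc + nh) D) (f : (Fin nh → X) → ℝ) :
    IEx xc f ∈ D ↔ IEm (countVec xc) f ∈ D := by
  obtain ⟨-, -, hsc, -⟩ := hcoh
  set K := (Finset.univ.filter fun ρ : Equiv.Perm (Fin nc) => xc ∘ ⇑ρ = xc).card with hK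
  have hKpos : 0 < K := by
    apply Finset.card_pos.mpr
    exact ⟨1, by simp⟩
  have hfac : (0 : ℝ) < (nc.factorial : ℝ) := by positivity
  have hKr : (0 : ℝ) < (K : ℝ) := by exact_mod_cast hKpos
  have hwa := smul_IEx_sub_sum_mem_WA xc f
  rw [sum_perm_IEx] at hwa
  constructor
  · intro hx
    have h1 : (nc.factorial : ℝ) • IEx xc f ∈ D := hsc _ hx _ hfac
    have hwa' : (K : ℝ) • IEm (countVec xc) f - (nc.factorial : ℝ) • IEx xc f
        ∈ WA X (nc + nh) := by
      have := neg_mem_WA hwa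
      rwa [neg_sub] at this
    have h2 : (K : ℝ) • IEm (countVec xc) f ∈ D := mem_of_sub_WA hexch hwa' h1
    have := hsc _ h2 ((K : ℝ)⁻¹) (by positivity)
    rwa [smul_smul, inv_mul_cancel₀ (ne_of_gt hKr), one_smul] at this
  · intro hm
    have h1 : (K : ℝ) • IEm (countVec xc) f ∈ D := hsc _ hm _ hKr
    have h2 : (nc.factorial : ℝ) • IEx xc f ∈ D := mem_of_sub_WA hexch hwa h1
    have := hsc _ h2 ((nc.factorial : ℝ)⁻¹) (by positivity)
    rwa [smul_smul, inv_mul_cancel₀ (ne_of_gt hfac), one_smul] at this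

theorem sufficiency_of_observed_count_vectors {nc nh : ℕ} (hnc : 1 ≤ nc) (hnh : 1 ≤ nh)
    (xc yc : Fin nc → X) (hxy : countVec xc = countVec yc)
    (D : Set ((Fin (nc + nh) → X) → ℝ))
    (hcoh : Coherent D) (hexch : Exchangeable X (nc + nh) D) :
    {f : (Fin nh → X) → ℝ | IEx xc f ∈ D} = {f : (Fin nh → X) → ℝ | IEx yc f ∈ D} ∧
    {f : (Fin nh → X) → ℝ | IEx xc f ∈ D} =
      {f : (Fin nh → X) → ℝ | IEm (countVec xc) f ∈ D} := by
  have hx := fun f => IEx_mem_iff_IEm_mem xc D hcoh hexch f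
  have hy := fun f => IEx_mem_iff_IEm_mem yc D hcoh hexch f
  constructor
  · ext f
    simp only [Set.mem_setOf_eq, hx f, hy f, hxy]
  · ext f
    simp only [Set.mem_setOf_eq, hx f]
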